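/- The m-channel linear system ε̇ = Ãε + Σ_{j=1}^m B̃_j ṽ_j with outputs ỹ_i = col{Ĉ_i, C̃_i} ε, i = 1,…,m, is jointly controllable and jointly observable; that is, the pair (Ã, [B̃_1 B̃_2 … B̃_m]) is controllable and the pair (col{ col{Ĉ_1,C̃_1}, …, col{Ĉ_m,C̃_m} }, Ã) is observable. -/
import Mathlib


open Matrix Finset

/-- The controllability matrix `[B, AB, …, A^{k-1}B]` of the pair `(A, B)`. -/
def ctrbMat {ι κ : Type*} [Fintype ι] [DecidableEq ι]
    (A : Matrix ι ι ℝ) (B : Matrix ι κ ℝ) (k : ℕ) : Matrix ι (Fin k × κ) ℝ :=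
  Matrix.of fun i p => ((A ^ (p.1 : ℕ)) * B) i p.2

/-- `(A, B)` is controllable if its controllability matrix has full rank. -/
def Controllable {ι κ : Type*} [Fintype ι] [DecidableEq ι] [Fintype κ]
    (A : Matrix ι ι ℝ) (B : Matrix ι κ ℝ) : Prop :=
  (ctrbMat A B (Fintype.card ι)).rank = Fintype.card ι

/-- The controllability index: the smallest positive `k` with
`rank [B, AB, …, A^{k-1}B]` full. -/
noncomputable def ctrlIndex {ι κ : Type*} [Fintype ι] [DecidableEq ι] [Fintype κ]
    (A : Matrix ι ι ℝ) (B : Matrix ι κ ℝ) : ℕ :=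
  sInf {k | 0 < k ∧ (ctrbMat A B k).rank = Fintype.card ι}

/-- `(C, A)` is observable iff `(Aᵀ, Cᵀ)` is controllable. -/
def Observable {ι κ : Type*} [Fintype ι] [DecidableEq ι] [Fintype κ]
    (C : Matrix κ ι ℝ) (A : Matrix ι ι ℝ) : Prop :=
  Controllable Aᵀ Cᵀ

/-- `B̃ᵢ = bᵢ ⊗ Iₙ`. -/
def Btil (n : ℕ) {m : ℕ} (i : Fin m) : Matrix (Fin m × Fin n) (Fin n) ℝ :=
  Matrix.of fun p l => if p.1 = i ∧ p.2 = l then (1 : ℝ) else 0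

/-- `Ã = I_m ⊗ (A + Σⱼ BⱼFⱼ) − Q`, where the `(i,j)` block of `Q` is `BⱼFⱼ`. -/
def Atil {n m : ℕ} {mdim : Fin m → ℕ} (A : Matrix (Fin n) (Fin n) ℝ)
    (B : ∀ i : Fin m, Matrix (Fin n) (Fin (mdim i)) ℝ)
    (F : ∀ i : Fin m, Matrix (Fin (mdim i)) (Fin n) ℝ) :
    Matrix (Fin m × Fin n) (Fin m × Fin n) ℝ :=
  Matrix.of fun p p' =>
    (if p.1 = p'.1 then (A + ∑ j : Fin m, B j * F j) p.2 p'.2 else 0)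
      - (B p'.1 * F p'.1) p.2 p'.2

/-- `C̃ᵢ`, the stack of the matrices `C_{ij} = c_{ij} ⊗ Iₙ` over the neighbors
`j ∈ 𝒩ᵢ`, where `c_{ij}` has `+1` in position `i`, `−1` in position `j`
(so `c_{ii} = 0` for the self-loop). -/
def Ctil (n : ℕ) {m : ℕ} (adj : Fin m → Fin m → Prop) [DecidableRel adj] (i : Fin m) :
    Matrix ({j // adj j i} × Fin n) (Fin m × Fin n) ℝ :=
  Matrix.of fun r p =>
    ((if p.1 = i then (1 : ℝ) else 0) - (if p.1 = (r.1 : Fin m) then 1 else 0))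
      * (if r.2 = p.2 then 1 else 0)

/-- `Hᵢ = [H_{ij¹} … H_{ijᵏ}]`, the row block of the matrices `H_{ij}`, `j ∈ 𝒩ᵢ`. -/
def Hblk {n m : ℕ} (adj : Fin m → Fin m → Prop) [DecidableRel adj]
    (H : Fin m → Fin m → Matrix (Fin n) (Fin n) ℝ) (i : Fin m) :
    Matrix (Fin n) ({j // adj j i} × Fin n) ℝ :=
  Matrix.of fun k r => H i (r.1 : Fin m) k r.2

lemma rank_eq_card_iff_vecMul {ι κ : Type*} [Fintype ι] [Fintype κ]
    (M : Matrix ι κ ℝ) :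
    M.rank = Fintype.card ι ↔ ∀ x : ι → ℝ, x ᵥ* M = 0 → x = 0 := by
  rw [← Matrix.rank_transpose]
  have h := LinearMap.finrank_range_add_finrank_ker (Mᵀ.mulVecLin)
  rw [Module.finrank_pi] at h
  have key : (∀ x : ι → ℝ, x ᵥ* M = 0 → x = 0) ↔ LinearMap.ker Mᵀ.mulVecLin = ⊥ := by
    rw [LinearMap.ker_eq_bot']
    constructor <;> intro H x hx
    · exact H x (by simpa [Matrix.mulVec_transpose] using hx)
    · exact H x (by simpa [Matrix.mulVec_transpose] using hx)
  rw [key, Matrix.rank]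
  constructor
  · intro hr
    have : Module.finrank ℝ (LinearMap.ker Mᵀ.mulVecLin) = 0 := by omega
    exact Submodule.finrank_eq_zero.mp this
  · intro hk
    rw [hk, finrank_bot] at h
    omega

lemma controllable_iff {ι κ : Type*} [Fintype ι] [DecidableEq ι] [Fintype κ]
    (A : Matrix ι ι ℝ) (B : Matrix ι κ ℝ) :
    Controllable A B ↔
      ∀ x : ι → ℝ, (∀ k, k < Fintype.card ι → x ᵥ* (A ^ k * B) = 0) → x = 0 := by
  unfold Controllable
  rw [rank_eq_card_iff_vecMul]
  constructor
  · intro H x hx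
    apply H x
    funext p
    have := congrFun (hx p.1 p.1.isLt) p.2
    simpa [ctrbMat, Matrix.vecMul, dotProduct] using this
  · intro H x hx
    apply H x
    intro k hk
    funext j
    have := congrFun hx (⟨k, hk⟩, j)
    simpa [ctrbMat, Matrix.vecMul, dotProduct] using this

lemma observable_iff {ι κ : Type*} [Fintype ι] [DecidableEq ι] [Fintype κ]
    (C : Matrix κ ι ℝ) (A : Matrix ι ι ℝ) :
    Observable C A ↔
      ∀ x : ι → ℝ, (∀ k, k < Fintype.card ι → C *ᵥ (A ^ k *ᵥ x) = 0) → x = 0 := by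
  unfold Observable
  rw [controllable_iff]
  have e : ∀ (x : ι → ℝ) (k : ℕ), x ᵥ* (Aᵀ ^ k * Cᵀ) = C *ᵥ (A ^ k *ᵥ x) := by
    intro x k
    rw [← Matrix.transpose_pow, ← Matrix.transpose_mul, Matrix.vecMul_transpose,
      ← Matrix.mulVec_mulVec]
  constructor <;> intro H x hx <;> apply H x <;> intro k hk
  · rw [e]; exact hx k hk
  · rw [← e]; exact hx k hk

lemma Atil_mulVec_const {n m : ℕ} {mdim : Fin m → ℕ} (A : Matrix (Fin n) (Fin n) ℝ)
    (B : ∀ i : Fin m, Matrix (Fin n) (Fin (mdim i)) ℝ)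
    (F : ∀ i : Fin m, Matrix (Fin (mdim i)) (Fin n) ℝ)
    (w : Fin n → ℝ) :
    (Atil A B F) *ᵥ (fun p => w p.2) = fun p => (A *ᵥ w) p.2 := by
  funext p
  simp only [Matrix.mulVec, dotProduct, Atil, Matrix.of_apply, Fintype.sum_prod_type]
  have : ∀ j : Fin m, ∑ l' : Fin n,
      ((if p.1 = j then (A + ∑ j : Fin m, B j * F j) p.2 l' else 0)
        - (B j * F j) p.2 l') * w l'
      = (if p.1 = j then ∑ l', (A + ∑ j : Fin m, B j * F j) p.2 l' * w l' else 0)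
        - ∑ l', (B j * F j) p.2 l' * w l' := by
    intro j
    by_cases h : p.1 = j <;> simp [h, sub_mul, Finset.sum_sub_distrib]
  simp only [this]
  rw [Finset.sum_sub_distrib, Finset.sum_ite_eq Finset.univ p.1]
  simp only [Finset.mem_univ, if_true]
  have h2 : ∑ j : Fin m, ∑ l', (B j * F j) p.2 l' * w l'
      = ∑ l', (∑ j : Fin m, B j * F j) p.2 l' * w l' := by
    rw [Finset.sum_comm]
    congr 1; funext l'
    rw [Matrix.sum_apply, Finset.sum_mul]
  rw [h2]
  simp only [Matrix.add_apply, add_mul, Finset.sum_add_distrib]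
  ring_nf

/-- **Lemma 1.** The `m`-channel system
`ε̇ = Ãε + Σⱼ B̃ⱼṽⱼ`, `ỹᵢ = col{Ĉᵢ, C̃ᵢ} ε` is jointly controllable and
jointly observable. -/
theorem error_system_jointly_ctrb_obs
    {n m : ℕ} (hn : 0 < n) (hm : 1 < m)
    (mdim pdim : Fin m → ℕ)
    (A : Matrix (Fin n) (Fin n) ℝ)
    (B : ∀ i : Fin m, Matrix (Fin n) (Fin (mdim i)) ℝ)
    (C : ∀ i : Fin m, Matrix (Fin (pdim i)) (Fin n) ℝ)
    (adj : Fin m → Fin m → Prop) [DecidableRel adj]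
    (hself : ∀ i, adj i i)
    (hconn : ∀ i j : Fin m, Relation.ReflTransGen adj i j)
    (hjc : Controllable A
      (Matrix.of fun k (p : Σ i : Fin m, Fin (mdim i)) => B p.1 k p.2))
    (hjo : Observable
      (Matrix.of fun (p : Σ i : Fin m, Fin (pdim i)) k => C p.1 p.2 k) A)
    (F : ∀ i : Fin m, Matrix (Fin (mdim i)) (Fin n) ℝ) :
    Controllable (Atil A B F)
      (Matrix.of fun (p : Fin m × Fin n) (p' : Fin m × Fin n) =>
        Btil n p'.1 p p'.2)
    ∧ Observable
        (Matrix.of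
          fun (s : Σ i : Fin m, (Fin (pdim i) ⊕ ({j // adj j i} × Fin n)))
              (p : Fin m × Fin n) =>
            Matrix.fromRows (C s.1 * (Btil n s.1)ᵀ) (Ctil n adj s.1) s.2 p)
        (Atil A B F) := by
  have hcard : Fintype.card (Fin m × Fin n) = m * n := by simp
  have hpos : 0 < Fintype.card (Fin m × Fin n) := by
    rw [hcard]; exact Nat.mul_pos (by omega) hn
  constructor
  · -- controllability: the input matrix is the identity
    have hBid : (Matrix.of fun (p p' : Fin m × Fin n) => Btil n p'.1 p p'.2)
        = (1 : Matrix (Fin m × Fin n) (Fin m × Fin n) ℝ) := by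
      ext p p'
      simp only [Matrix.of_apply, Btil, Matrix.one_apply, Prod.ext_iff]
    rw [controllable_iff]
    intro x hx
    have h0 := hx 0 hpos
    rwa [hBid, pow_zero, one_mul, Matrix.vecMul_one] at h0
  · rw [observable_iff]
    intro x hx
    set Abig := Atil A B F with hAbigdef
    -- evaluation of the `Ĉᵢ` rows
    have key1 : ∀ (z : Fin m × Fin n → ℝ) (i : Fin m) (q : Fin (pdim i)),
        ∑ p : Fin m × Fin n,
            Matrix.fromRows (C i * (Btil n i)ᵀ) (Ctil n adj i) (Sum.inl q) p * z p
          = ∑ b : Fin n, C i q b * z (i, b) := by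
      intro z i q
      have inner : ∀ (a : Fin m) (b : Fin n),
          Matrix.fromRows (C i * (Btil n i)ᵀ) (Ctil n adj i) (Sum.inl q) (a, b)
            = if a = i then C i q b else 0 := by
        intro a b
        simp only [Matrix.fromRows_apply_inl, Matrix.mul_apply, Matrix.transpose_apply,
          Btil, Matrix.of_apply]
        by_cases h : a = i
        · simp [h, Finset.sum_ite_eq]
        · simp [h]
      rw [Fintype.sum_prod_type]
      simp only [inner]
      rw [Finset.sum_eq_single i]
      · simp
      · intro a _ ha; simp [ha]
      · simp
    -- evaluation of the `C̃ᵢ` rows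
    have key2 : ∀ (z : Fin m × Fin n → ℝ) (i : Fin m) (j : {j // adj j i}) (t : Fin n),
        ∑ p : Fin m × Fin n,
            Matrix.fromRows (C i * (Btil n i)ᵀ) (Ctil n adj i) (Sum.inr (j, t)) p * z p
          = z (i, t) - z ((j : Fin m), t) := by
      intro z i j t
      rw [Fintype.sum_prod_type]
      have inner : ∀ a : Fin m,
          ∑ b : Fin n,
              Matrix.fromRows (C i * (Btil n i)ᵀ) (Ctil n adj i) (Sum.inr (j, t)) (a, b) * z (a, b)
            = (if a = i then z (a, t) else 0) - (if a = (j : Fin m) then z (a, t) else 0) := by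
        intro a
        simp only [Matrix.fromRows_apply_inr, Ctil, Matrix.of_apply]
        rw [Finset.sum_eq_single t]
        · have ht : (if t = t then (1:ℝ) else 0) = 1 := if_pos rfl
          rw [ht, mul_one]
          split_ifs <;> ring
        · intro b _ hb; simp [Ne.symm hb]
        · simp
      simp only [inner]
      rw [Finset.sum_sub_distrib, Finset.sum_ite_eq' Finset.univ i,
        Finset.sum_ite_eq' Finset.univ (j : Fin m)]
      simp
    have ha : ∀ k, k < Fintype.card (Fin m × Fin n) → ∀ (i : Fin m) (q : Fin (pdim i)),
        ∑ b : Fin n, C i q b * (Abig ^ k *ᵥ x) (i, b) = 0 := by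
      intro k hk i q
      have h := congrFun (hx k hk) ⟨i, Sum.inl q⟩
      set z := Abig ^ k *ᵥ x with hz
      simp only [Matrix.mulVec, dotProduct, Matrix.of_apply, Pi.zero_apply] at h
      rw [key1 z i q] at h
      exact h
    have hb : ∀ (i : Fin m) (j : Fin m), adj j i → ∀ t : Fin n, x (i, t) = x (j, t) := by
      intro i j hadj t
      have h := congrFun (hx 0 hpos) ⟨i, Sum.inr (⟨j, hadj⟩, t)⟩
      rw [pow_zero, Matrix.one_mulVec] at h
      simp only [Matrix.mulVec, dotProduct, Matrix.of_apply, Pi.zero_apply] at h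
      rw [key2 x i ⟨j, hadj⟩ t] at h
      exact sub_eq_zero.mp h
    -- propagate equality along the strongly connected graph
    have hchain : ∀ (a c : Fin m), Relation.ReflTransGen adj a c →
        ∀ t : Fin n, x (c, t) = x (a, t) := by
      intro a c h
      induction h with
      | refl => intro t; rfl
      | tail _ hbc ih => intro t; rw [hb _ _ hbc t]; exact ih t
    have hm0 : (0 : ℕ) < m := by omega
    set i0 : Fin m := ⟨0, hm0⟩ with hi0
    set y : Fin n → ℝ := fun l => x (i0, l) with hy
    have hconst : x = fun p => y p.2 := by
      funext p
      exact hchain i0 p.1 (hconn i0 p.1) p.2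
    have hpow : ∀ k : ℕ, Abig ^ k *ᵥ x = fun p => (A ^ k *ᵥ y) p.2 := by
      intro k
      induction k with
      | zero => simpa [Matrix.one_mulVec] using hconst
      | succ k ih =>
        rw [pow_succ', ← Matrix.mulVec_mulVec, ih, hAbigdef,
          Atil_mulVec_const A B F (A ^ k *ᵥ y), pow_succ', ← Matrix.mulVec_mulVec]
    -- apply joint observability
    rw [observable_iff] at hjo
    have hy0 : y = 0 := by
      apply hjo
      intro k hk
      have hk' : k < Fintype.card (Fin m × Fin n) := by
        rw [hcard]
        have : k < n := by simpa using hk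
        calc k < n := this
          _ ≤ m * n := Nat.le_mul_of_pos_left n hm0
      funext s
      obtain ⟨i, q⟩ := s
      have h := ha k hk' i q
      rw [hpow k] at h
      simpa [Matrix.mulVec, dotProduct, Matrix.mul_apply, Finset.sum_mul, mul_assoc] using h
    funext p
    rw [congrFun hconst p, hy0]
    rfl
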